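/- Let G be a network with request R and extended graph G_ext. Let Ŝ ⊆ S and let f : E_ext → ℕ satisfy the connectivity inequalities f(δ⁺_{E_R}(W)) ≥ 1 for every W ⊆ V_G with W∩Ŝ ≠ ∅. Let (u,v) ∈ E_R with f(u,v) ≥ 1 and let f' agree with f except f'(u,v) = f(u,v) − 1. Suppose W ⊆ V_G with W∩Ŝ ≠ ∅ and f'(δ⁺_{E_R}(W)) = 0. Then: (a) u ∈ W and v ∉ W; (b) f(u,v) = 1, and (u,v) is the unique edge of δ⁺_{E_R}(W) with positive flow in f; and (c) for every s ∈ Ŝ∩W there exists a directed path from s to the super sink o⁻_r in the support graph G^f_ext that traverses the edge (u,v). -/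

import Mathlib

/-! Formalization of the Constrained Virtual Steiner Arborescence Problem (CVSAP),
its single-commodity flow IP formulation, and related notions. -/

/-- Vertices of the extended graph: original vertices plus super source `src`,
super sink `sinkS` for Steiner nodes and super sink `sinkR` for the root. -/
inductive ExtV (V : Type) where
  | orig : V → ExtV V
  | src : ExtV V
  | sinkS : ExtV V
  | sinkR : ExtV V
deriving DecidableEq

open ExtV

/-- A (finite) capacitated directed network. -/
structure Network (V : Type) [DecidableEq V] where
  E : Finset (V × V)
  uE : V × V → ℕ
  cE : V × V → ℝ

/-- A request `R = (root, S, T, u_r, c_S, u_S)`. -/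
structure Request (V : Type) [DecidableEq V] where
  root : V
  S : Finset V
  T : Finset V
  ur : ℕ
  cS : V → ℝ
  uS : V → ℕ

variable {V : Type} [DecidableEq V]

/-- Well-formedness: root is neither terminal nor Steiner site, Steiner sites and terminals
are disjoint, and all costs are positive. -/
def RequestWF (N : Network V) (R : Request V) : Prop :=
  R.root ∉ R.T ∧ R.root ∉ R.S ∧ Disjoint R.S R.T ∧
    (∀ s ∈ R.S, 0 < R.cS s) ∧ (∀ e ∈ N.E, 0 < N.cE e)

/-- Edge set of the extended graph `G_ext`. -/
def Eext (N : Network V) (R : Request V) : Finset (ExtV V × ExtV V) :=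
  (N.E.image fun e => (orig e.1, orig e.2)) ∪
    ({(orig R.root, sinkR)} : Finset (ExtV V × ExtV V)) ∪
    (R.S.image fun s => (orig s, sinkS)) ∪
    (R.S.image fun s => (src, orig s)) ∪
    (R.T.image fun t => (src, orig t))

/-- `E_R`: the extended edges without the edges into the Steiner super sink. -/
def ERext (N : Network V) (R : Request V) : Finset (ExtV V × ExtV V) :=
  (Eext N R).filter fun e => e.2 ≠ sinkS

/-- Edges of `F` leaving node `v`. -/
def outV (F : Finset (ExtV V × ExtV V)) (v : ExtV V) : Finset (ExtV V × ExtV V) :=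
  F.filter fun e => e.1 = v

/-- Edges of `F` entering node `v`. -/
def inV (F : Finset (ExtV V × ExtV V)) (v : ExtV V) : Finset (ExtV V × ExtV V) :=
  F.filter fun e => e.2 = v

/-- Edges of `F` leaving the node set `W`. -/
def outSet (F : Finset (ExtV V × ExtV V)) (W : Finset (ExtV V)) : Finset (ExtV V × ExtV V) :=
  F.filter fun e => e.1 ∈ W ∧ e.2 ∉ W

/-- Total flow of `f` on the edge set `F`. -/
def fSum (f : ExtV V × ExtV V → ℕ) (F : Finset (ExtV V × ExtV V)) : ℕ :=
  ∑ e ∈ F, f e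

/-- Embedding of a set of original nodes into the extended graph. -/
def extW (W : Finset V) : Finset (ExtV V) := W.image orig

/-- A walk in the support graph `G^f_ext`: consecutive nodes are joined by extended
edges carrying positive flow. -/
def IsSupportWalk (N : Network V) (R : Request V) (f : ExtV V × ExtV V → ℕ)
    (p : List (ExtV V)) : Prop :=
  p.Chain' fun a b => (a, b) ∈ Eext N R ∧ 1 ≤ f (a, b)

/-- (IP-1): flow conservation at all original nodes. -/
def IP1 (N : Network V) (R : Request V) (f : ExtV V × ExtV V → ℕ) : Prop :=
  ∀ v : V, fSum f (outV (Eext N R) (orig v)) = fSum f (inV (Eext N R) (orig v))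

/-- (IP-2): connectivity inequalities for activated Steiner sites. -/
def IP2 (N : Network V) (R : Request V) (x : V → ℕ) (f : ExtV V × ExtV V → ℕ) : Prop :=
  ∀ W : Finset V, ∀ s ∈ W, s ∈ R.S → x s ≤ fSum f (outSet (ERext N R) (extW W))

/-- (IP-3): directed Steiner cuts for terminals. -/
def IP3 (N : Network V) (R : Request V) (f : ExtV V × ExtV V → ℕ) : Prop :=
  ∀ W : Finset V, (W ∩ R.T).Nonempty → 1 ≤ fSum f (outSet (ERext N R) (extW W))

/-- Feasibility for the integer program IP-A-CVSAP. -/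
def IPFeasible (N : Network V) (R : Request V) (x : V → ℕ) (f : ExtV V × ExtV V → ℕ) : Prop :=
  (∀ s ∈ R.S, x s ≤ 1) ∧
  IP1 N R f ∧
  IP2 N R x f ∧
  IP3 N R f ∧
  (∀ s ∈ R.S, x s ≤ f (orig s, sinkS)) ∧
  (∀ s ∈ R.S, f (orig s, sinkS) ≤ R.uS s * x s) ∧
  f (orig R.root, sinkR) ≤ R.ur ∧
  (∀ e ∈ N.E, f (orig e.1, orig e.2) ≤ N.uE e) ∧
  (∀ t ∈ R.T, f (src, orig t) = 1) ∧
  (∀ s ∈ R.S, f (src, orig s) = x s)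

/-- Objective value of IP-A-CVSAP. -/
noncomputable def costIP (N : Network V) (R : Request V) (x : V → ℕ)
    (f : ExtV V × ExtV V → ℕ) : ℝ :=
  ∑ e ∈ N.E, N.cE e * f (orig e.1, orig e.2) + ∑ s ∈ R.S, R.cS s * x s

/-- A Virtual Arborescence: nodes, virtual edges and the mapping of virtual edges
onto paths in the underlying graph. -/
structure VirtArb (V : Type) where
  VT : Finset V
  ET : Finset (V × V)
  pi : V × V → List V

/-- `p` is a simple directed path in `N` from `u` to `v`. -/
def IsPathInG (N : Network V) (p : List V) (u v : V) : Prop :=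
  p.Chain' (fun a b => (a, b) ∈ N.E) ∧ p.head? = some u ∧ p.getLast? = some v ∧ p.Nodup

/-- The virtual edges whose path uses the edge `e` of the underlying graph. -/
def pathUses (TA : VirtArb V) (e : V × V) : Finset (V × V) :=
  TA.ET.filter fun d => e ∈ (TA.pi d).zip (TA.pi d).tail

/-- `|π(E_T)[e]|`: the number of paths of the virtual arborescence using edge `e`. -/
def pathCount (TA : VirtArb V) (e : V × V) : ℕ := (pathUses TA e).card

/-- Total degree of node `v` with respect to the virtual edge set `ET`. -/
def degTotal (ET : Finset (V × V)) (v : V) : ℕ :=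
  (ET.filter fun e => e.1 = v).card + (ET.filter fun e => e.2 = v).card

/-- `(VT, ET, r)` is an arborescence rooted at `r` with all edges oriented towards `r`. -/
def ArborTowards (VT : Finset V) (ET : Finset (V × V)) (r : V) : Prop :=
  (∀ e ∈ ET, e.1 ∈ VT ∧ e.2 ∈ VT ∧ e.1 ≠ e.2) ∧
  (∀ v ∈ VT, v ≠ r → (ET.filter fun e => e.1 = v).card = 1) ∧
  (∀ e ∈ ET, e.1 ≠ r) ∧
  (∀ v ∈ VT, ∃ p : List V, p.Chain' (fun a b => (a, b) ∈ ET) ∧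
      p.head? = some v ∧ p.getLast? = some r)

/-- `(VT, ET, r)` is an arborescence rooted at `r` with all edges oriented away from `r`. -/
def ArborAway (VT : Finset V) (ET : Finset (V × V)) (r : V) : Prop :=
  (∀ e ∈ ET, e.1 ∈ VT ∧ e.2 ∈ VT ∧ e.1 ≠ e.2) ∧
  (∀ v ∈ VT, v ≠ r → (ET.filter fun e => e.2 = v).card = 1) ∧
  (∀ e ∈ ET, e.2 ≠ r) ∧
  (∀ v ∈ VT, ∃ p : List V, p.Chain' (fun a b => (a, b) ∈ ET) ∧
      p.head? = some r ∧ p.getLast? = some v)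

/-- Feasible solutions of A-CVSAP: all arborescence edges oriented towards the root. -/
def FeasibleACVSAP (N : Network V) (R : Request V) (TA : VirtArb V) : Prop :=
  R.root ∈ TA.VT ∧
  ArborTowards TA.VT TA.ET R.root ∧
  (∀ d ∈ TA.ET, IsPathInG N (TA.pi d) d.1 d.2) ∧
  R.T ⊆ TA.VT ∧
  TA.VT ⊆ insert R.root (R.S ∪ R.T) ∧
  (∀ t ∈ R.T, degTotal TA.ET t = 1) ∧
  degTotal TA.ET R.root ≤ R.ur ∧
  (∀ s ∈ R.S, s ∈ TA.VT → degTotal TA.ET s ≤ R.uS s + 1) ∧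
  (∀ e ∈ N.E, pathCount TA e ≤ N.uE e)

/-- Feasible solutions of M-CVSAP: all arborescence edges oriented away from the root. -/
def FeasibleMCVSAP (N : Network V) (R : Request V) (TA : VirtArb V) : Prop :=
  R.root ∈ TA.VT ∧
  ArborAway TA.VT TA.ET R.root ∧
  (∀ d ∈ TA.ET, IsPathInG N (TA.pi d) d.1 d.2) ∧
  R.T ⊆ TA.VT ∧
  TA.VT ⊆ insert R.root (R.S ∪ R.T) ∧
  (∀ t ∈ R.T, degTotal TA.ET t = 1) ∧
  degTotal TA.ET R.root ≤ R.ur ∧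
  (∀ s ∈ R.S, s ∈ TA.VT → degTotal TA.ET s ≤ R.uS s + 1) ∧
  (∀ e ∈ N.E, pathCount TA e ≤ N.uE e)

/-- Cost of a virtual arborescence. -/
noncomputable def costCVSAP (N : Network V) (R : Request V) (TA : VirtArb V) : ℝ :=
  ∑ e ∈ N.E, N.cE e * pathCount TA e + ∑ s ∈ R.S.filter (· ∈ TA.VT), R.cS s


/-! ### Auxiliary lemmas -/

lemma rtg_to_list {α : Type} {r : α → α → Prop} {a b : α}
    (h : Relation.ReflTransGen r a b) :
    ∃ p : List α, p.Chain' r ∧ p.head? = some a ∧ p.getLast? = some b := by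
  induction h using Relation.ReflTransGen.head_induction_on with
  | refl => exact ⟨[b], List.isChain_singleton b, rfl, rfl⟩
  | head hab _ ih =>
    obtain ⟨p, hc, hh, hl⟩ := ih
    refine ⟨_ :: p, ?_, rfl, ?_⟩
    · rw [show List.Chain' r (_ :: p) ↔ _ from List.isChain_cons]
      refine ⟨fun y hy => ?_, hc⟩
      rw [hh] at hy
      obtain rfl : _ = y := by simpa using hy
      exact hab
    · cases p with
      | nil => simp at hh
      | cons x xs => simpa using hl

lemma mem_zip_tail_cons {α : Type} {p : List α} {u v a : α}
    (h : (u, v) ∈ p.zip p.tail) : (u, v) ∈ (a :: p).zip (a :: p).tail := by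
  cases p with
  | nil => simp at h
  | cons b rest => exact List.mem_cons_of_mem _ h

lemma mem_zip_append {α : Type} (l : List α) (u v : α) (t : List α) :
    (u, v) ∈ (l ++ u :: v :: t).zip (l ++ u :: v :: t).tail := by
  induction l with
  | nil => simp [List.zip]
  | cons a l ih => exact mem_zip_tail_cons ih

lemma mem_zip_of_append {α : Type} {l1 l2 : List α} {u v : α}
    (h1 : l1.getLast? = some u) (h2 : l2.head? = some v) :
    (u, v) ∈ (l1 ++ l2).zip (l1 ++ l2).tail := by
  obtain ⟨l1', rfl⟩ := List.getLast?_eq_some_iff.mp h1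
  obtain ⟨l2', rfl⟩ : ∃ l2', l2 = v :: l2' := by
    cases l2 with
    | nil => simp at h2
    | cons x xs =>
      obtain rfl : x = v := by simpa using h2
      exact ⟨xs, rfl⟩
  simpa [List.append_assoc] using mem_zip_append l1' u v l2'

lemma Eext_snd_ne_src {N : Network V} {R : Request V} {e : ExtV V × ExtV V}
    (he : e ∈ Eext N R) : e.2 ≠ src := by
  unfold Eext at he
  simp only [Finset.mem_union, Finset.mem_image, Finset.mem_singleton] at he
  rcases he with ((((⟨a, _, h⟩ | h) | ⟨a, _, h⟩) | ⟨a, _, h⟩) | ⟨a, _, h⟩) <;>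
    subst h <;> simp

lemma exists_pos_of_fSum_pos {f : ExtV V × ExtV V → ℕ} {F : Finset (ExtV V × ExtV V)}
    (h : 1 ≤ fSum f F) : ∃ e ∈ F, 1 ≤ f e := by
  by_contra hc
  push_neg at hc
  have h0 : fSum f F = 0 := Finset.sum_eq_zero fun e he => by have := hc e he; omega
  omega

/-! ### Statement 5: properties of a violated cut after decrementing a flow unit. -/

theorem violated_cut_properties [Fintype V] (N : Network V) (R : Request V)
    (hWF : RequestWF N R) (Shat : Finset V) (hShat : Shat ⊆ R.S)
    (f : ExtV V × ExtV V → ℕ)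
    (hconn : ∀ W : Finset V, (W ∩ Shat).Nonempty →
      1 ≤ fSum f (outSet (ERext N R) (extW W)))
    (u v : ExtV V) (huv : (u, v) ∈ ERext N R) (hfuv : 1 ≤ f (u, v))
    (W : Finset V) (hW : (W ∩ Shat).Nonempty)
    (hW0 : fSum (Function.update f (u, v) (f (u, v) - 1))
        (outSet (ERext N R) (extW W)) = 0) :
    (u ∈ extW W ∧ v ∉ extW W) ∧
    (f (u, v) = 1 ∧ ∀ e ∈ outSet (ERext N R) (extW W), 1 ≤ f e → e = (u, v)) ∧
    (∀ s ∈ Shat ∩ W, ∃ p : List (ExtV V),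
        IsSupportWalk N R f p ∧ p.head? = some (ExtV.orig s) ∧
        p.getLast? = some ExtV.sinkR ∧ (u, v) ∈ p.zip p.tail) := by
  classical
  have hzero : ∀ e ∈ outSet (ERext N R) (extW W),
      Function.update f (u, v) (f (u, v) - 1) e = 0 := by
    intro e he
    exact (Finset.sum_eq_zero_iff.mp hW0) e he
  have hne : ∀ e ∈ outSet (ERext N R) (extW W), e ≠ (u, v) → f e = 0 := by
    intro e he hne'
    have h0 := hzero e he
    rwa [Function.update_of_ne hne'] at h0
  have hcut1 : 1 ≤ fSum f (outSet (ERext N R) (extW W)) := hconn W hW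
  have huvcut : (u, v) ∈ outSet (ERext N R) (extW W) := by
    by_contra hc
    have h0 : fSum f (outSet (ERext N R) (extW W)) = 0 :=
      Finset.sum_eq_zero (fun e he => hne e he (fun h => hc (h ▸ he)))
    omega
  obtain ⟨-, huW, hvW⟩ := Finset.mem_filter.mp huvcut
  have hfuv1 : f (u, v) = 1 := by
    have h0 := hzero _ huvcut
    rw [Function.update_self] at h0
    omega
  have huniq : ∀ e ∈ outSet (ERext N R) (extW W), 1 ≤ f e → e = (u, v) := by
    intro e he h1
    by_contra hc
    have := hne e he hc
    omega
  set rel : ExtV V → ExtV V → Prop :=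
    fun a b => (a, b) ∈ Eext N R ∧ 1 ≤ f (a, b) with hrel
  have reach_u : ∀ s ∈ Shat, s ∈ W → Relation.ReflTransGen rel (orig s) u := by
    intro s hsS hsW
    by_contra hru
    set A : Finset V := W.filter (fun x => ¬ Relation.ReflTransGen rel (orig x) u) with hA
    have hsA : s ∈ A := Finset.mem_filter.mpr ⟨hsW, hru⟩
    have hAS : (A ∩ Shat).Nonempty := ⟨s, Finset.mem_inter.mpr ⟨hsA, hsS⟩⟩
    obtain ⟨e, heA, hfe⟩ := exists_pos_of_fSum_pos (hconn A hAS)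
    obtain ⟨ea, eb⟩ := e
    obtain ⟨heER, ha, hb⟩ := Finset.mem_filter.mp heA
    obtain ⟨a', ha'A, rfl⟩ := Finset.mem_image.mp ha
    have ha'W : a' ∈ W := (Finset.mem_filter.mp ha'A).1
    have ha'n : ¬ Relation.ReflTransGen rel (orig a') u := (Finset.mem_filter.mp ha'A).2
    by_cases hbW : eb ∈ extW W
    · obtain ⟨b', hb'W, rfl⟩ := Finset.mem_image.mp hbW
      have hb'A : b' ∉ A := fun h => hb (Finset.mem_image.mpr ⟨b', h, rfl⟩)
      have hb'r : Relation.ReflTransGen rel (orig b') u := by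
        by_contra h
        exact hb'A (Finset.mem_filter.mpr ⟨hb'W, h⟩)
      have hstep : rel (orig a') (orig b') :=
        ⟨(Finset.mem_filter.mp heER).1, hfe⟩
      exact ha'n (hb'r.head hstep)
    · have hecut : (orig a', eb) ∈ outSet (ERext N R) (extW W) :=
        Finset.mem_filter.mpr ⟨heER, Finset.mem_image.mpr ⟨a', ha'W, rfl⟩, hbW⟩
      have heq := huniq _ hecut hfe
      have hau : orig a' = u := by
        simpa using congrArg Prod.fst heq
      exact ha'n (hau ▸ Relation.ReflTransGen.refl)
  have reach_sinkR : Relation.ReflTransGen rel v sinkR := by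
    by_contra hrv
    set D : Finset V :=
      Finset.univ.filter (fun x => Relation.ReflTransGen rel v (orig x)) with hD
    have hWS' : ((W ∪ D) ∩ Shat).Nonempty := by
      obtain ⟨s, hs⟩ := hW
      rw [Finset.mem_inter] at hs
      exact ⟨s, Finset.mem_inter.mpr ⟨Finset.mem_union_left _ hs.1, hs.2⟩⟩
    obtain ⟨e, heA, hfe⟩ := exists_pos_of_fSum_pos (hconn (W ∪ D) hWS')
    obtain ⟨ea, eb⟩ := e
    obtain ⟨heER, ha, hb⟩ := Finset.mem_filter.mp heA
    obtain ⟨a', ha'WD, rfl⟩ := Finset.mem_image.mp ha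
    have heE : (orig a', eb) ∈ Eext N R := (Finset.mem_filter.mp heER).1
    have hbS : eb ≠ sinkS := by
      have := (Finset.mem_filter.mp heER).2
      simpa using this
    have hr : Relation.ReflTransGen rel v eb := by
      rcases Finset.mem_union.mp ha'WD with ha'W | ha'D
      · -- a' ∈ W : the edge is a W-cut edge, hence (u, v)
        have hbnW : eb ∉ extW W := fun h =>
          hb (by
            obtain ⟨b', hb', rfl⟩ := Finset.mem_image.mp h
            exact Finset.mem_image.mpr ⟨b', Finset.mem_union_left _ hb', rfl⟩)
        have hecut : (orig a', eb) ∈ outSet (ERext N R) (extW W) :=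
          Finset.mem_filter.mpr ⟨heER, Finset.mem_image.mpr ⟨a', ha'W, rfl⟩, hbnW⟩
        have heq := huniq _ hecut hfe
        have hbv : eb = v := by
          simpa using congrArg Prod.snd heq
        exact hbv ▸ Relation.ReflTransGen.refl
      · have ha'r : Relation.ReflTransGen rel v (orig a') :=
          (Finset.mem_filter.mp ha'D).2
        exact ha'r.tail ⟨heE, hfe⟩
    cases eb with
    | orig b' =>
      exact hb (Finset.mem_image.mpr ⟨b', Finset.mem_union_right _
        (Finset.mem_filter.mpr ⟨Finset.mem_univ _, hr⟩), rfl⟩)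
    | src => exact Eext_snd_ne_src heE rfl
    | sinkS => exact hbS rfl
    | sinkR => exact hrv hr
  refine ⟨⟨huW, hvW⟩, ⟨hfuv1, huniq⟩, ?_⟩
  intro s hs
  rw [Finset.mem_inter] at hs
  obtain ⟨p1, hc1, hh1, hl1⟩ := rtg_to_list (reach_u s hs.1 hs.2)
  obtain ⟨p2, hc2, hh2, hl2⟩ := rtg_to_list reach_sinkR
  have hrel_uv : rel u v := ⟨(Finset.mem_filter.mp huv).1, hfuv⟩
  refine ⟨p1 ++ p2, ?_, ?_, ?_, mem_zip_of_append hl1 hh2⟩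
  · refine List.IsChain.append hc1 hc2 ?_
    intro x hx y hy
    rw [hl1] at hx
    rw [hh2] at hy
    obtain rfl : u = x := by simpa using hx
    obtain rfl : v = y := by simpa using hy
    exact hrel_uv
  · cases p1 with
    | nil => simp at hh1
    | cons a t => simpa using hh1
  · rw [List.getLast?_append, hl2]
    rfl
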